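/- (Davies) Consider the graph over (ℤ², 1) with standard weights: b(z,w) = 1 if |z₁ − w₁| + |z₂ − w₂| = 1 and b(z,w) = 0 otherwise, and m ≡ 1. Then ρ_ℰ(x,y) ~ |x − y| as |x − y| → ∞, where |·| is the Euclidean norm on ℝ²; that is, for every ε > 0 there exists R > 0 such that |ρ_ℰ(x,y)/|x − y| − 1| < ε for all x, y ∈ ℤ² with |x − y| ≥ R. -/

import Mathlib

noncomputable section

/-- Standard weights on `ℤ²`: `b(z,w) = 1` iff `|z₁ − w₁| + |z₂ − w₂| = 1`. -/
def bZ2 (z w : ℤ × ℤ) : ℝ := if |z.1 - w.1| + |z.2 - w.2| = 1 then 1 else 0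

/-- The energy density `Γ(f)(x) = (1/2) Σ_y b(x,y)(f(x) − f(y))²` (measure `m ≡ 1`). -/
def gammaDensityZ2 (f : ℤ × ℤ → ℝ) (x : ℤ × ℤ) : ℝ :=
  (2 : ℝ)⁻¹ * ∑' y, bZ2 x y * (f x - f y) ^ 2

/-- `ρ_ℰ(x,y) = sup{|ψ(x) − ψ(y)| : ψ finitely supported, ‖Γ(ψ)‖_∞ ≤ 1}`. -/
def rhoEZ2 (x y : ℤ × ℤ) : ℝ :=
  sSup {r | ∃ ψ : ℤ × ℤ → ℝ, (Function.support ψ).Finite ∧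
    (∀ z, gammaDensityZ2 ψ z ≤ 1) ∧ r = |ψ x - ψ y|}

/-- The Euclidean norm of `x − y` for `x, y ∈ ℤ²`. -/
def euclDist (x y : ℤ × ℤ) : ℝ :=
  Real.sqrt (((x.1 - y.1 : ℤ) : ℝ) ^ 2 + ((x.2 - y.2 : ℤ) : ℝ) ^ 2)

namespace Davies

lemma gamma_eq (f : ℤ × ℤ → ℝ) (x : ℤ × ℤ) :
    gammaDensityZ2 f x = (2:ℝ)⁻¹ * ((f x - f (x + (1,0)))^2 + (f x - f (x - (1,0)))^2
      + (f x - f (x + (0,1)))^2 + (f x - f (x - (0,1)))^2) := by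
  have h1 : x + ((1:ℤ),(0:ℤ)) ≠ x - (1,0) := by
    simp [Prod.ext_iff, Prod.add_def, Prod.sub_def] <;> omega
  have h2 : x + ((1:ℤ),(0:ℤ)) ≠ x + (0,1) := by
    simp [Prod.ext_iff, Prod.add_def, Prod.sub_def] <;> omega
  have h3 : x + ((1:ℤ),(0:ℤ)) ≠ x - (0,1) := by
    simp [Prod.ext_iff, Prod.add_def, Prod.sub_def] <;> omega
  have h4 : x - ((1:ℤ),(0:ℤ)) ≠ x + (0,1) := by
    simp [Prod.ext_iff, Prod.add_def, Prod.sub_def] <;> omega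
  have h5 : x - ((1:ℤ),(0:ℤ)) ≠ x - (0,1) := by
    simp [Prod.ext_iff, Prod.add_def, Prod.sub_def] <;> omega
  have h6 : x + ((0:ℤ),(1:ℤ)) ≠ x - (0,1) := by
    simp [Prod.ext_iff, Prod.add_def, Prod.sub_def] <;> omega
  have hs : ∑' y, bZ2 x y * (f x - f y) ^ 2
      = ∑ y ∈ ({x + (1,0), x - (1,0), x + (0,1), x - (0,1)} : Finset (ℤ × ℤ)),
        bZ2 x y * (f x - f y) ^ 2 := by
    apply tsum_eq_sum
    intro y hy
    have : bZ2 x y = 0 := by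
      unfold bZ2
      rw [if_neg]
      intro h
      apply hy
      simp only [Finset.mem_insert, Finset.mem_singleton]
      have := abs_nonneg (x.1 - y.1)
      have := abs_nonneg (x.2 - y.2)
      rcases abs_cases (x.1 - y.1) with ⟨e1,_⟩|⟨e1,_⟩ <;>
        rcases abs_cases (x.2 - y.2) with ⟨e2,_⟩|⟨e2,_⟩ <;>
      · simp [Prod.ext_iff, Prod.add_def, Prod.sub_def]
        omega
    simp [this]
  rw [gammaDensityZ2, hs]
  rw [Finset.sum_insert (by simp [h1, h2, h3]), Finset.sum_insert (by simp [h4, h5]),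
    Finset.sum_insert (by simp [h6]), Finset.sum_singleton]
  have b1 : bZ2 x (x + (1,0)) = 1 := by simp [bZ2, Prod.add_def]
  have b2 : bZ2 x (x - (1,0)) = 1 := by simp [bZ2, Prod.sub_def]
  have b3 : bZ2 x (x + (0,1)) = 1 := by simp [bZ2, Prod.add_def]
  have b4 : bZ2 x (x - (0,1)) = 1 := by simp [bZ2, Prod.sub_def]
  rw [b1, b2, b3, b4]
  ring

/-- forward differences -/
def D1 (f : ℤ × ℤ → ℝ) (z : ℤ × ℤ) : ℝ := f (z + (1,0)) - f z
def D2 (f : ℤ × ℤ → ℝ) (z : ℤ × ℤ) : ℝ := f (z + (0,1)) - f z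

lemma two_gamma (f : ℤ × ℤ → ℝ) (z : ℤ × ℤ) :
    2 * gammaDensityZ2 f z
      = D1 f z ^ 2 + D1 f (z - (1,0)) ^ 2 + D2 f z ^ 2 + D2 f (z - (0,1)) ^ 2 := by
  rw [gamma_eq]
  have e1 : z - ((1:ℤ),(0:ℤ)) + (1,0) = z := by abel
  have e2 : z - ((0:ℤ),(1:ℤ)) + (0,1) = z := by abel
  rw [D1, D1, D2, D2, e1, e2]
  ring

section gbound

variable {g : ℤ × ℤ → ℝ} {c : ℝ} (hc : 0 ≤ c)
variable (hg : ∀ z, D1 g z ^ 2 + D2 g z ^ 2 ≤ c ^ 2)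

include hc hg

lemma habs1 : ∀ z, |D1 g z| ≤ c := by
  intro z
  have h := hg z
  have h2 := sq_nonneg (D2 g z)
  have : |D1 g z| = Real.sqrt ((D1 g z)^2) := (Real.sqrt_sq_eq_abs _).symm
  rw [this, show c = Real.sqrt (c^2) by rw [Real.sqrt_sq hc]]
  exact Real.sqrt_le_sqrt (by nlinarith)

lemma habs2 : ∀ z, |D2 g z| ≤ c := by
  intro z
  have h := hg z
  have h2 := sq_nonneg (D1 g z)
  have : |D2 g z| = Real.sqrt ((D2 g z)^2) := (Real.sqrt_sq_eq_abs _).symm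
  rw [this, show c = Real.sqrt (c^2) by rw [Real.sqrt_sq hc]]
  exact Real.sqrt_le_sqrt (by nlinarith)

lemma hlip_h : ∀ (s : ℕ) (z : ℤ × ℤ), |g (z + ((s:ℤ), 0)) - g z| ≤ c * s := by
  intro s
  induction s with
  | zero => intro z; simp [show z + ((0:ℤ),(0:ℤ)) = z from by ext <;> simp]
  | succ m ih =>
    intro z
    have e : z + (((m+1:ℕ):ℤ), (0:ℤ)) = (z + ((m:ℤ),0)) + (1,0) := by
      rw [Prod.ext_iff]; push_cast; constructor <;> simp <;> ring
    have h1 := ih z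
    have h2 : |g ((z + ((m:ℤ),0)) + (1,0)) - g (z + ((m:ℤ),0))| ≤ c := habs1 hc hg _
    have h3 := abs_sub_le (g ((z + ((m:ℤ),0)) + (1,0))) (g (z + ((m:ℤ),0))) (g z)
    rw [e]
    push_cast
    nlinarith [abs_nonneg (g ((z + ((m:ℤ),0)) + (1,0)) - g z)]

lemma hlip_v : ∀ (t : ℕ) (z : ℤ × ℤ), |g (z + (0, (t:ℤ))) - g z| ≤ c * t := by
  intro t
  induction t with
  | zero => intro z; simp [show z + ((0:ℤ),(0:ℤ)) = z from by ext <;> simp]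
  | succ m ih =>
    intro z
    have e : z + ((0:ℤ), ((m+1:ℕ):ℤ)) = (z + (0,(m:ℤ))) + (0,1) := by
      rw [Prod.ext_iff]; push_cast; constructor <;> simp <;> ring
    have h1 := ih z
    have h2 : |g ((z + ((0:ℤ),(m:ℤ))) + (0,1)) - g (z + ((0:ℤ),(m:ℤ)))| ≤ c := habs2 hc hg _
    have h3 := abs_sub_le (g ((z + ((0:ℤ),(m:ℤ))) + (0,1))) (g (z + ((0:ℤ),(m:ℤ)))) (g z)
    rw [e]
    push_cast
    nlinarith [abs_nonneg (g ((z + ((0:ℤ),(m:ℤ))) + (0,1)) - g z)]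

lemma hlipZ : ∀ (s t : ℤ) (z : ℤ × ℤ), 0 ≤ s → 0 ≤ t →
    |g (z + (s, t)) - g z| ≤ c * (s + t) := by
  intro s t z hs ht
  obtain ⟨s', rfl⟩ : ∃ s' : ℕ, s = (s' : ℤ) := ⟨s.toNat, (Int.toNat_of_nonneg hs).symm⟩
  obtain ⟨t', rfl⟩ : ∃ t' : ℕ, t = (t' : ℤ) := ⟨t.toNat, (Int.toNat_of_nonneg ht).symm⟩
  have e : z + ((s':ℤ), (t':ℤ)) = (z + ((s':ℤ),0)) + (0,(t':ℤ)) := by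
    rw [Prod.ext_iff]; constructor <;> simp
  have h1 := hlip_h hc hg s' z
  have h2 := hlip_v hc hg t' (z + ((s':ℤ),0))
  have h3 := abs_sub_le (g ((z + ((s':ℤ),0)) + (0,(t':ℤ)))) (g (z + ((s':ℤ),0))) (g z)
  rw [e]
  push_cast
  nlinarith [abs_nonneg (g ((z + ((s':ℤ),0)) + (0,(t':ℤ))) - g z)]

lemma hdiag1 : ∀ (t : ℕ) (z : ℤ × ℤ), |g (z + ((t:ℤ), -(t:ℤ))) - g z| ≤ 2 * c * t := by
  intro t
  induction t with
  | zero => intro z; simp [show z + ((0:ℤ),(0:ℤ)) = z from by ext <;> simp]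
  | succ m ih =>
    intro z
    set u := z + ((m:ℤ), -(m:ℤ)) with hu
    have e : z + (((m+1:ℕ):ℤ), -((m+1:ℕ):ℤ)) = u + (1,-1) := by
      rw [Prod.ext_iff]; push_cast; constructor <;> simp [hu] <;> ring
    have e2 : (u + ((1:ℤ),(-1:ℤ))) + (0,1) = u + (1,0) := by
      rw [Prod.ext_iff]; constructor <;> simp
    have h1 := ih z
    have h2 : |D1 g u| ≤ c := habs1 hc hg u
    have h3 : |D2 g (u + (1,-1))| ≤ c := habs2 hc hg _
    rw [D1] at h2
    rw [D2, e2] at h3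
    have h4 := abs_sub_le (g (u + ((1:ℤ),(-1:ℤ)))) (g (u + ((1:ℤ),(0:ℤ)))) (g z)
    have h5 := abs_sub_le (g (u + ((1:ℤ),(0:ℤ)))) (g u) (g z)
    have h6 := abs_sub (g (u + ((1:ℤ),(-1:ℤ)))) (g (u + ((1:ℤ),(0:ℤ))))
    rw [e]
    push_cast
    have h7 : |g (u + ((1:ℤ),(-1:ℤ))) - g (u + ((1:ℤ),(0:ℤ)))| ≤ c := by
      rw [← abs_neg]; simpa [neg_sub] using h3
    nlinarith [abs_nonneg (g (u + ((1:ℤ),(-1:ℤ))) - g z)]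

lemma hdiag2 : ∀ (t : ℕ) (z : ℤ × ℤ), |g (z + (-(t:ℤ), (t:ℤ))) - g z| ≤ 2 * c * t := by
  intro t
  induction t with
  | zero => intro z; simp [show z + ((0:ℤ),(0:ℤ)) = z from by ext <;> simp]
  | succ m ih =>
    intro z
    set u := z + (-(m:ℤ), (m:ℤ)) with hu
    have e : z + (-((m+1:ℕ):ℤ), ((m+1:ℕ):ℤ)) = u + (-1,1) := by
      rw [Prod.ext_iff]; push_cast; constructor <;> simp [hu] <;> ring
    have e2 : (u + ((-1:ℤ),(0:ℤ))) + (1,0) = u := by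
      rw [Prod.ext_iff]; constructor <;> simp
    have e3 : (u + ((-1:ℤ),(0:ℤ))) + (0,1) = u + (-1,1) := by
      rw [Prod.ext_iff]; constructor <;> simp
    have h1 := ih z
    have h2 : |D1 g (u + (-1,0))| ≤ c := habs1 hc hg _
    have h3 : |D2 g (u + (-1,0))| ≤ c := habs2 hc hg _
    rw [D1, e2] at h2
    rw [D2, e3] at h3
    have h4 := abs_sub_le (g (u + ((-1:ℤ),(1:ℤ)))) (g (u + ((-1:ℤ),(0:ℤ)))) (g z)
    have h5 := abs_sub_le (g (u + ((-1:ℤ),(0:ℤ)))) (g u) (g z)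
    rw [e]
    push_cast
    have h7 : |g (u + ((-1:ℤ),(1:ℤ))) - g (u + ((-1:ℤ),(0:ℤ)))| ≤ c := h3
    have h8 : |g (u + ((-1:ℤ),(0:ℤ))) - g u| ≤ c := by
      rw [← abs_neg]; simpa [neg_sub] using h2
    nlinarith [abs_nonneg (g (u + ((-1:ℤ),(1:ℤ))) - g z)]

end gbound

/-! ### binomial weights -/

def bf (α β : ℝ) (k i : ℕ) : ℝ := (k.choose i : ℝ) * α ^ i * β ^ (k - i)

section bf

variable {α β : ℝ} (hα : 0 ≤ α) (hβ : 0 ≤ β) (hαβ : α + β = 1)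

lemma bf_nonneg (k i : ℕ) (hα : 0 ≤ α) (hβ : 0 ≤ β) : 0 ≤ bf α β k i := by
  unfold bf; positivity

lemma bf_succ (k i : ℕ) (hik : i ≤ k) :
    bf α β (k+1) (i+1) = α * bf α β k i + β * bf α β k (i+1) := by
  rcases eq_or_lt_of_le hik with rfl | hlt
  · have h0 : i.choose (i+1) = 0 := Nat.choose_eq_zero_of_lt (by omega)
    simp [bf, h0, Nat.choose_self, pow_succ]
    ring
  · have : (k+1).choose (i+1) = k.choose i + k.choose (i+1) := Nat.choose_succ_succ k i
    unfold bf
    rw [this]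
    have e1 : k + 1 - (i+1) = k - i := by omega
    have e2 : k - i = (k - (i+1)) + 1 := by omega
    rw [e1, e2, pow_succ]
    push_cast
    ring

lemma bf_rec (k : ℕ) (h : ℕ → ℝ) :
    ∑ i ∈ Finset.range (k+2), bf α β (k+1) i * h i
      = ∑ i ∈ Finset.range (k+1), bf α β k i * (α * h (i+1) + β * h i) := by
  rw [Finset.sum_range_succ' (fun i => bf α β (k+1) i * h i) (k+1)]
  have hF0 : bf α β (k+1) 0 = β * bf α β k 0 := by
    simp [bf, pow_succ]; ring
  have hstep : ∀ i ∈ Finset.range (k+1),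
      bf α β (k+1) (i+1) * h (i+1)
        = α * bf α β k i * h (i+1) + β * (bf α β k (i+1) * h (i+1)) := by
    intro i hi
    rw [bf_succ k i (by simpa using Nat.lt_succ_iff.mp (Finset.mem_range.mp hi))]
    ring
  have e2 : ∑ i ∈ Finset.range (k+1), β * (bf α β k (i+1) * h (i+1)) + bf α β (k+1) 0 * h 0
      = β * ∑ i ∈ Finset.range (k+2), bf α β k i * h i := by
    rw [Finset.sum_range_succ' (fun i => bf α β k i * h i) (k+1), hF0, mul_add,
      Finset.mul_sum]
    exact congrArg₂ (· + ·) (Finset.sum_congr rfl fun i _ => by ring) (by ring)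
  have e3 : ∑ i ∈ Finset.range (k+2), bf α β k i * h i
      = ∑ i ∈ Finset.range (k+1), bf α β k i * h i := by
    rw [Finset.sum_range_succ]
    have : bf α β k (k+1) = 0 := by
      simp [bf, Nat.choose_eq_zero_of_lt (Nat.lt_succ_self k)]
    simp [this]
  calc (∑ i ∈ Finset.range (k+1), bf α β (k+1) (i+1) * h (i+1)) + bf α β (k+1) 0 * h 0
      = (∑ i ∈ Finset.range (k+1), α * bf α β k i * h (i+1))
        + ((∑ i ∈ Finset.range (k+1), β * (bf α β k (i+1) * h (i+1))) + bf α β (k+1) 0 * h 0) := by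
        rw [Finset.sum_congr rfl hstep, Finset.sum_add_distrib]; ring
    _ = (∑ i ∈ Finset.range (k+1), α * bf α β k i * h (i+1))
        + β * ∑ i ∈ Finset.range (k+1), bf α β k i * h i := by rw [e2, e3]
    _ = ∑ i ∈ Finset.range (k+1), bf α β k i * (α * h (i+1) + β * h i) := by
        rw [Finset.mul_sum, ← Finset.sum_add_distrib]
        exact Finset.sum_congr rfl (fun i _ => by ring)

include hαβ in
lemma bf_sum : ∀ k, ∑ i ∈ Finset.range (k+1), bf α β k i = 1 := by
  intro k
  induction k with
  | zero => simp [bf]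
  | succ m ih =>
    have := bf_rec (α := α) (β := β) m (fun _ => 1)
    simp only [mul_one] at this
    rw [this]
    calc ∑ i ∈ Finset.range (m+1), bf α β m i * (α + β)
        = ∑ i ∈ Finset.range (m+1), bf α β m i := by
          rw [hαβ]; simp
      _ = 1 := ih

include hαβ in
lemma bf_var : ∀ k, ∑ i ∈ Finset.range (k+1), bf α β k i * ((i:ℝ) - k * α)^2
    = k * (α * β) := by
  intro k
  induction k with
  | zero => simp [bf]
  | succ m ih =>
    have hrec := bf_rec (α := α) (β := β) m (fun i => ((i:ℝ) - (m+1) * α)^2)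
    push_cast at hrec ⊢
    rw [hrec]
    have hpt : ∀ i : ℕ, bf α β m i * (α * (((i:ℝ)+1) - ((m:ℝ)+1) * α)^2
          + β * (((i:ℝ)) - ((m:ℝ)+1) * α)^2)
        = bf α β m i * (((i:ℝ) - m * α)^2 + α * β) := by
      intro i
      have hb : β = 1 - α := by linarith
      rw [hb]; ring
    calc ∑ i ∈ Finset.range (m+1), bf α β m i * (α * (((i:ℝ)+1) - ((m:ℝ)+1) * α)^2
          + β * (((i:ℝ)) - ((m:ℝ)+1) * α)^2)
        = ∑ i ∈ Finset.range (m+1), bf α β m i * (((i:ℝ) - m * α)^2 + α * β) := by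
          exact Finset.sum_congr rfl (fun i _ => hpt i)
      _ = (∑ i ∈ Finset.range (m+1), bf α β m i * ((i:ℝ) - m * α)^2)
          + (∑ i ∈ Finset.range (m+1), bf α β m i) * (α * β) := by
          rw [Finset.sum_mul, ← Finset.sum_add_distrib]
          exact Finset.sum_congr rfl (fun i _ => by ring)
      _ = m * (α * β) + 1 * (α * β) := by rw [ih, bf_sum hαβ]
      _ = ((m:ℝ)+1) * (α * β) := by ring

include hα hβ hαβ in
lemma bf_mean_abs (k : ℕ) :
    ∑ i ∈ Finset.range (k+1), bf α β k i * |(i:ℝ) - k * α|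
      ≤ Real.sqrt (k * (α * β)) := by
  set S := ∑ i ∈ Finset.range (k+1), bf α β k i * |(i:ℝ) - k * α| with hS
  have hS0 : 0 ≤ S :=
    Finset.sum_nonneg (fun i _ => mul_nonneg (bf_nonneg _ _ hα hβ) (abs_nonneg _))
  have hcs := Finset.sum_mul_sq_le_sq_mul_sq (Finset.range (k+1))
      (fun i => Real.sqrt (bf α β k i))
      (fun i => Real.sqrt (bf α β k i) * |(i:ℝ) - k * α|)
  have he : ∀ i ∈ Finset.range (k+1),
      Real.sqrt (bf α β k i) * (Real.sqrt (bf α β k i) * |(i:ℝ) - k * α|)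
        = bf α β k i * |(i:ℝ) - k * α| := by
    intro i _
    rw [← mul_assoc, Real.mul_self_sqrt (bf_nonneg k i hα hβ)]
  have he2 : ∀ i ∈ Finset.range (k+1), Real.sqrt (bf α β k i) ^ 2 = bf α β k i := by
    intro i _; exact Real.sq_sqrt (bf_nonneg k i hα hβ)
  have he3 : ∀ i ∈ Finset.range (k+1),
      (Real.sqrt (bf α β k i) * |(i:ℝ) - k * α|) ^ 2
        = bf α β k i * ((i:ℝ) - k * α)^2 := by
    intro i _
    rw [mul_pow, Real.sq_sqrt (bf_nonneg k i hα hβ), sq_abs]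
  rw [Finset.sum_congr rfl he, Finset.sum_congr rfl he2, Finset.sum_congr rfl he3] at hcs
  rw [bf_sum hαβ, bf_var hαβ, one_mul] at hcs
  have : S ^ 2 ≤ k * (α * β) := by rw [hS]; exact hcs
  calc S = Real.sqrt (S^2) := by rw [Real.sqrt_sq hS0]
    _ ≤ Real.sqrt (k * (α * β)) := Real.sqrt_le_sqrt this

end bf

lemma cs2 {a b A B c : ℝ} (hc : 0 ≤ c) (h : a^2 + b^2 ≤ c^2) :
    A * a + B * b ≤ Real.sqrt (A^2 + B^2) * c := by
  have h1 : (A * a + B * b)^2 ≤ (A^2 + B^2) * (a^2 + b^2) := by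
    nlinarith [sq_nonneg (A * b - B * a)]
  have h2 : (A * a + B * b)^2 ≤ (A^2 + B^2) * c^2 := by
    nlinarith [sq_nonneg A, sq_nonneg B]
  calc A * a + B * b ≤ |A * a + B * b| := le_abs_self _
    _ = Real.sqrt ((A * a + B * b)^2) := (Real.sqrt_sq_eq_abs _).symm
    _ ≤ Real.sqrt ((A^2 + B^2) * c^2) := Real.sqrt_le_sqrt h2
    _ = Real.sqrt (A^2 + B^2) * c := by
        rw [Real.sqrt_mul (by positivity), Real.sqrt_sq hc]

lemma lemB {g : ℤ × ℤ → ℝ} {c : ℝ} (hc : 0 ≤ c)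
    (hg : ∀ z, D1 g z ^ 2 + D2 g z ^ 2 ≤ c ^ 2)
    (y : ℤ × ℤ) (p q : ℕ) :
    g (y + ((p:ℤ),(q:ℤ))) - g y
      ≤ c * Real.sqrt ((p:ℝ)^2+(q:ℝ)^2) + c * Real.sqrt ((p:ℝ)+(q:ℝ)) := by
  rcases Nat.eq_zero_or_pos (p + q) with h0 | hn
  · obtain ⟨rfl, rfl⟩ : p = 0 ∧ q = 0 := by omega
    have e0 : y + ((0:ℤ),(0:ℤ)) = y := by rw [Prod.ext_iff]; constructor <;> simp
    push_cast
    rw [e0, sub_self]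
    positivity
  · set n := p + q with hn'
    have hnR : (0:ℝ) < (n:ℝ) := by exact_mod_cast hn
    set α := (p:ℝ)/(n:ℝ) with hα'
    set β := (q:ℝ)/(n:ℝ) with hβ'
    have hα : 0 ≤ α := by positivity
    have hβ : 0 ≤ β := by positivity
    have hαβ : α + β = 1 := by
      rw [hα', hβ', ← add_div, div_eq_one_iff_eq (ne_of_gt hnR), hn']
      push_cast
      ring
    set pos : ℕ → ℕ → ℤ × ℤ := fun k i => y + ((i:ℤ), (k:ℤ) - (i:ℤ)) with hpos
    set G : ℕ → ℝ := fun k => ∑ i ∈ Finset.range (k+1), bf α β k i * g (pos k i) with hG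
    have hstep : ∀ k, G (k+1) ≤ G k + c * Real.sqrt (α^2+β^2) := by
      intro k
      have hrec := bf_rec (α := α) (β := β) k (fun i => g (pos (k+1) i))
      have hGk1 : G (k+1) = ∑ i ∈ Finset.range (k+1),
          bf α β k i * (α * g (pos k i + (1,0)) + β * g (pos k i + (0,1))) := by
        have h0 : G (k+1) = ∑ i ∈ Finset.range (k+2), bf α β (k+1) i * g (pos (k+1) i) := rfl
        rw [h0, hrec]
        refine Finset.sum_congr rfl fun i _ => ?_
        have e1 : pos (k+1) (i+1) = pos k i + (1,0) := by
          simp only [hpos, Prod.ext_iff, Prod.add_def]; push_cast; constructor <;> ring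
        have e2 : pos (k+1) i = pos k i + (0,1) := by
          simp only [hpos, Prod.ext_iff, Prod.add_def]; push_cast; constructor <;> ring
        rw [e1, e2]
      have hterm : ∀ i ∈ Finset.range (k+1),
          bf α β k i * (α * g (pos k i + (1,0)) + β * g (pos k i + (0,1)))
            ≤ bf α β k i * (g (pos k i) + Real.sqrt (α^2+β^2) * c) := by
        intro i _
        refine mul_le_mul_of_nonneg_left ?_ (bf_nonneg _ _ hα hβ)
        have hcs := cs2 (a := D1 g (pos k i)) (b := D2 g (pos k i)) (A := α) (B := β)
          hc (hg (pos k i))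
        rw [D1, D2] at hcs
        have hz : (α + β) * g (pos k i) = g (pos k i) := by rw [hαβ]; ring
        nlinarith [hcs, hz]
      have hsum1 := bf_sum (α := α) (β := β) hαβ k
      calc G (k+1) ≤ ∑ i ∈ Finset.range (k+1),
            bf α β k i * (g (pos k i) + Real.sqrt (α^2+β^2) * c) := by
            rw [hGk1]; exact Finset.sum_le_sum hterm
        _ = G k + (∑ i ∈ Finset.range (k+1), bf α β k i) * (Real.sqrt (α^2+β^2) * c) := by
            rw [hG, Finset.sum_mul, ← Finset.sum_add_distrib]
            exact Finset.sum_congr rfl fun i _ => by ring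
        _ = G k + c * Real.sqrt (α^2+β^2) := by rw [hsum1]; ring
    have htel : ∀ k, G k ≤ G 0 + k * (c * Real.sqrt (α^2+β^2)) := by
      intro k
      induction k with
      | zero => simp
      | succ m ih =>
        calc G (m+1) ≤ G m + c * Real.sqrt (α^2+β^2) := hstep m
          _ ≤ G 0 + m * (c * Real.sqrt (α^2+β^2)) + c * Real.sqrt (α^2+β^2) := by linarith
          _ = G 0 + (m+1 : ℕ) * (c * Real.sqrt (α^2+β^2)) := by push_cast; ring
    have hG0 : G 0 = g y := by
      have h0 : G 0 = ∑ i ∈ Finset.range 1, bf α β 0 i * g (pos 0 i) := rfl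
      have e : pos 0 0 = y := by
        simp only [hpos, Prod.ext_iff]; constructor <;> simp
      rw [h0, Finset.sum_range_one, e]
      simp [bf]
    have hmain : (n:ℝ) * Real.sqrt (α^2+β^2) = Real.sqrt ((p:ℝ)^2+(q:ℝ)^2) := by
      rw [show (n:ℝ) * Real.sqrt (α^2+β^2) = Real.sqrt ((n:ℝ)^2 * (α^2+β^2)) by
        rw [Real.sqrt_mul (by positivity), Real.sqrt_sq (by positivity)]]
      congr 1
      rw [hα', hβ']
      field_simp
    have hGn : G n ≤ g y + c * Real.sqrt ((p:ℝ)^2+(q:ℝ)^2) := by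
      have := htel n
      rw [hG0] at this
      calc G n ≤ g y + n * (c * Real.sqrt (α^2+β^2)) := this
        _ = g y + c * ((n:ℝ) * Real.sqrt (α^2+β^2)) := by ring
        _ = g y + c * Real.sqrt ((p:ℝ)^2+(q:ℝ)^2) := by rw [hmain]
    -- collection step
    set x := y + ((p:ℤ),(q:ℤ)) with hx
    have hcol : g x - G n ≤ c * Real.sqrt ((p:ℝ)+(q:ℝ)) := by
      have hdiff : g x - G n = ∑ i ∈ Finset.range (n+1), bf α β n i * (g x - g (pos n i)) := by
        have h0 : G n = ∑ i ∈ Finset.range (n+1), bf α β n i * g (pos n i) := rfl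
        have h1 : ∑ i ∈ Finset.range (n+1), bf α β n i * (g x - g (pos n i))
            = (∑ i ∈ Finset.range (n+1), bf α β n i) * g x - G n := by
          rw [h0, Finset.sum_mul, ← Finset.sum_sub_distrib]
          exact Finset.sum_congr rfl fun i _ => by ring
        rw [h1, bf_sum hαβ, one_mul]
      have hterm : ∀ i ∈ Finset.range (n+1),
          bf α β n i * (g x - g (pos n i)) ≤ bf α β n i * (2 * c * |(i:ℝ) - n * α|) := by
        intro i _
        refine mul_le_mul_of_nonneg_left ?_ (bf_nonneg _ _ hα hβ)
        have hbound : |g x - g (pos n i)| ≤ 2 * c * |(i:ℝ) - n * α| := by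
          have hpα : (n:ℝ) * α = (p:ℝ) := by
            rw [hα']; field_simp
          rw [hpα]
          rcases le_or_gt (i:ℤ) (p:ℤ) with hip | hip
          · set t : ℕ := ((p:ℤ) - (i:ℤ)).toNat with ht
            have htv : ((t:ℤ)) = (p:ℤ) - (i:ℤ) := Int.toNat_of_nonneg (by omega)
            have e : x = pos n i + ((t:ℤ), -(t:ℤ)) := by
              simp only [hx, hpos, Prod.ext_iff, Prod.add_def]
              rw [htv]
              constructor <;> push_cast [hn'] <;> ring
            rw [e]
            have := hdiag1 hc hg t (pos n i)
            have habs : |(i:ℝ) - (p:ℝ)| = (t:ℝ) := by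
              rw [abs_sub_comm, ← Real.sqrt_sq_eq_abs]
              rw [show ((p:ℝ) - (i:ℝ)) = ((t:ℝ)) by exact_mod_cast congrArg (Int.cast : ℤ → ℝ) htv.symm]
              exact Real.sqrt_sq (by positivity)
            calc |g (pos n i + ((t:ℤ), -(t:ℤ))) - g (pos n i)| ≤ 2 * c * t := this
              _ = 2 * c * |(i:ℝ) - (p:ℝ)| := by rw [habs]
          · set t : ℕ := ((i:ℤ) - (p:ℤ)).toNat with ht
            have htv : ((t:ℤ)) = (i:ℤ) - (p:ℤ) := Int.toNat_of_nonneg (by omega)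
            have e : pos n i = x + ((t:ℤ), -(t:ℤ)) := by
              simp only [hx, hpos, Prod.ext_iff, Prod.add_def]
              rw [htv]
              constructor <;> push_cast [hn'] <;> ring
            have h2 : |g (pos n i) - g x| ≤ 2 * c * t := by rw [e]; exact hdiag1 hc hg t x
            have habs : |(i:ℝ) - (p:ℝ)| = (t:ℝ) := by
              rw [← Real.sqrt_sq_eq_abs]
              rw [show ((i:ℝ) - (p:ℝ)) = ((t:ℝ)) by exact_mod_cast congrArg (Int.cast : ℤ → ℝ) htv.symm]
              exact Real.sqrt_sq (by positivity)
            rw [abs_sub_comm, habs]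
            exact h2
        calc g x - g (pos n i) ≤ |g x - g (pos n i)| := le_abs_self _
          _ ≤ 2 * c * |(i:ℝ) - n * α| := hbound
      have hvar := bf_mean_abs (α := α) (β := β) hα hβ hαβ n
      have hαβ4 : α * β ≤ 1/4 := by nlinarith [sq_nonneg (α - β)]
      have hmono : Real.sqrt ((n:ℝ) * (α * β)) ≤ Real.sqrt ((n:ℝ) * (1/4)) :=
        Real.sqrt_le_sqrt (by nlinarith)
      have h14 : Real.sqrt ((n:ℝ) * (1/4)) = Real.sqrt (n:ℝ) / 2 := by
        rw [show ((n:ℝ) * (1/4)) = (n:ℝ) * (1/2)^2 by ring,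
          Real.sqrt_mul (by positivity), Real.sqrt_sq (by norm_num)]
        ring
      calc g x - G n = ∑ i ∈ Finset.range (n+1), bf α β n i * (g x - g (pos n i)) := hdiff
        _ ≤ ∑ i ∈ Finset.range (n+1), bf α β n i * (2 * c * |(i:ℝ) - n * α|) :=
            Finset.sum_le_sum hterm
        _ = 2 * c * ∑ i ∈ Finset.range (n+1), bf α β n i * |(i:ℝ) - n * α| := by
            rw [Finset.mul_sum]
            exact Finset.sum_congr rfl fun i _ => by ring
        _ ≤ 2 * c * Real.sqrt ((n:ℝ) * (α * β)) := by
            refine mul_le_mul_of_nonneg_left hvar (by positivity)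
        _ ≤ 2 * c * (Real.sqrt (n:ℝ) / 2) := by
            refine mul_le_mul_of_nonneg_left (hmono.trans_eq h14) (by positivity)
        _ = c * Real.sqrt ((p:ℝ)+(q:ℝ)) := by
            rw [hn']; push_cast; ring
    linarith [hGn, hcol]

lemma lemB_abs {g : ℤ × ℤ → ℝ} {c : ℝ} (hc : 0 ≤ c)
    (hg : ∀ z, D1 g z ^ 2 + D2 g z ^ 2 ≤ c ^ 2)
    (y : ℤ × ℤ) (p q : ℕ) :
    |g (y + ((p:ℤ),(q:ℤ))) - g y|
      ≤ c * Real.sqrt ((p:ℝ)^2+(q:ℝ)^2) + c * Real.sqrt ((p:ℝ)+(q:ℝ)) := by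
  have h1 := lemB hc hg y p q
  have hg' : ∀ z, D1 (fun w => -g w) z ^ 2 + D2 (fun w => -g w) z ^ 2 ≤ c ^ 2 := by
    intro z
    have := hg z
    simp only [D1, D2] at *
    nlinarith [this]
  have h2 := lemB (g := fun w => -g w) hc hg' y p q
  rw [abs_le]
  constructor <;> nlinarith [h1, h2]

/-! ### box averaging -/

def box (L : ℕ) : Finset (ℤ × ℤ) :=
  Finset.Icc (0:ℤ) ((L:ℤ)-1) ×ˢ Finset.Icc (0:ℤ) ((L:ℤ)-1)

def boxP (L : ℕ) : Finset (ℤ × ℤ) :=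
  Finset.Icc (0:ℤ) (L:ℤ) ×ˢ Finset.Icc (0:ℤ) (L:ℤ)

lemma box_card (L : ℕ) : (box L).card = L^2 := by
  rw [box, Finset.card_product, Int.card_Icc]
  simp
  rw [pow_two]

lemma boxP_card (L : ℕ) : (boxP L).card = (L+1)^2 := by
  rw [boxP, Finset.card_product, Int.card_Icc]
  simp
  ring

def avgF (ψ : ℤ × ℤ → ℝ) (L : ℕ) (z : ℤ × ℤ) : ℝ :=
  (((L:ℝ))^2)⁻¹ * ∑ w ∈ box L, ψ (z + w)

section avg

variable {ψ : ℤ × ℤ → ℝ} (hΓ : ∀ z, gammaDensityZ2 ψ z ≤ 1) {L : ℕ} (hL : 0 < L)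

include hΓ in
lemma sum_DD_le (z : ℤ × ℤ) :
    (∑ w ∈ box L, (D1 ψ (z+w)^2 + D2 ψ (z+w)^2)) ≤ ((L:ℝ)+1)^2 := by
  have hpt : ∀ w : ℤ × ℤ,
      D1 ψ (z+w)^2 + D1 ψ (z+w-(1,0))^2 + D2 ψ (z+w)^2 + D2 ψ (z+w-(0,1))^2 ≤ 2 := by
    intro w
    have h1 := two_gamma ψ (z+w)
    have h2 := hΓ (z+w)
    linarith [h1, h2]
  have hsub : box L ⊆ boxP L := by
    intro w hw
    simp only [box, boxP, Finset.mem_product, Finset.mem_Icc] at *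
    omega
  have hsum : ∑ w ∈ boxP L,
      (D1 ψ (z+w)^2 + D1 ψ (z+w-(1,0))^2 + D2 ψ (z+w)^2 + D2 ψ (z+w-(0,1))^2)
        ≤ 2 * ((L:ℝ)+1)^2 := by
    calc ∑ w ∈ boxP L, (D1 ψ (z+w)^2 + D1 ψ (z+w-(1,0))^2 + D2 ψ (z+w)^2 + D2 ψ (z+w-(0,1))^2)
        ≤ ∑ _w ∈ boxP L, (2:ℝ) := Finset.sum_le_sum (fun w _ => hpt w)
      _ = (boxP L).card * 2 := by rw [Finset.sum_const, nsmul_eq_mul]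
      _ = 2 * ((L:ℝ)+1)^2 := by rw [boxP_card]; push_cast; ring
  have h1 : ∑ w ∈ box L, D1 ψ (z+w)^2 ≤ ∑ w ∈ boxP L, D1 ψ (z+w)^2 :=
    Finset.sum_le_sum_of_subset_of_nonneg hsub (fun _ _ _ => sq_nonneg _)
  have h2 : ∑ w ∈ box L, D2 ψ (z+w)^2 ≤ ∑ w ∈ boxP L, D2 ψ (z+w)^2 :=
    Finset.sum_le_sum_of_subset_of_nonneg hsub (fun _ _ _ => sq_nonneg _)
  have h3 : ∑ w ∈ box L, D1 ψ (z+w)^2 ≤ ∑ w ∈ boxP L, D1 ψ (z+w-(1,0))^2 := by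
    have hmap : ∑ w ∈ (box L).map (addRightEmbedding ((1,0) : ℤ×ℤ)), D1 ψ (z+w-(1,0))^2
        = ∑ w ∈ box L, D1 ψ (z+w)^2 := by
      rw [Finset.sum_map]
      refine Finset.sum_congr rfl fun w _ => ?_
      have e : z + (addRightEmbedding ((1,0) : ℤ×ℤ)) w - (1,0) = z + w := by
        simp [addRightEmbedding]
        abel
      rw [e]
    rw [← hmap]
    refine Finset.sum_le_sum_of_subset_of_nonneg ?_ (fun _ _ _ => sq_nonneg _)
    intro u hu
    simp only [Finset.mem_map, addRightEmbedding_apply] at hu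
    obtain ⟨w, hw, rfl⟩ := hu
    simp only [box, boxP, Finset.mem_product, Finset.mem_Icc, Prod.add_def] at *
    omega
  have h4 : ∑ w ∈ box L, D2 ψ (z+w)^2 ≤ ∑ w ∈ boxP L, D2 ψ (z+w-(0,1))^2 := by
    have hmap : ∑ w ∈ (box L).map (addRightEmbedding ((0,1) : ℤ×ℤ)), D2 ψ (z+w-(0,1))^2
        = ∑ w ∈ box L, D2 ψ (z+w)^2 := by
      rw [Finset.sum_map]
      refine Finset.sum_congr rfl fun w _ => ?_
      have e : z + (addRightEmbedding ((0,1) : ℤ×ℤ)) w - (0,1) = z + w := by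
        simp [addRightEmbedding]
        abel
      rw [e]
    rw [← hmap]
    refine Finset.sum_le_sum_of_subset_of_nonneg ?_ (fun _ _ _ => sq_nonneg _)
    intro u hu
    simp only [Finset.mem_map, addRightEmbedding_apply] at hu
    obtain ⟨w, hw, rfl⟩ := hu
    simp only [box, boxP, Finset.mem_product, Finset.mem_Icc, Prod.add_def] at *
    omega
  have hsplit : ∑ w ∈ boxP L,
      (D1 ψ (z+w)^2 + D1 ψ (z+w-(1,0))^2 + D2 ψ (z+w)^2 + D2 ψ (z+w-(0,1))^2)
      = (∑ w ∈ boxP L, D1 ψ (z+w)^2) + (∑ w ∈ boxP L, D1 ψ (z+w-(1,0))^2)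
        + (∑ w ∈ boxP L, D2 ψ (z+w)^2) + (∑ w ∈ boxP L, D2 ψ (z+w-(0,1))^2) := by
    rw [← Finset.sum_add_distrib, ← Finset.sum_add_distrib, ← Finset.sum_add_distrib]
  have hsplit2 : ∑ w ∈ box L, (D1 ψ (z+w)^2 + D2 ψ (z+w)^2)
      = (∑ w ∈ box L, D1 ψ (z+w)^2) + (∑ w ∈ box L, D2 ψ (z+w)^2) :=
    Finset.sum_add_distrib
  linarith [hsum, h1, h2, h3, h4, hsplit ▸ hsum, hsplit2]

include hΓ hL in
lemma lemA : ∀ z, D1 (avgF ψ L) z ^ 2 + D2 (avgF ψ L) z ^ 2 ≤ (((L:ℝ)+1)/L)^2 := by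
  intro z
  have hLR : (0:ℝ) < (L:ℝ) := by exact_mod_cast hL
  have hD1 : D1 (avgF ψ L) z = ((L:ℝ)^2)⁻¹ * ∑ w ∈ box L, D1 ψ (z+w) := by
    rw [D1, avgF, avgF, ← mul_sub, ← Finset.sum_sub_distrib]
    congr 1
    refine Finset.sum_congr rfl fun w _ => ?_
    rw [D1]
    have e : z + (1,0) + w = z + w + (1,0) := by abel
    rw [e]
  have hD2 : D2 (avgF ψ L) z = ((L:ℝ)^2)⁻¹ * ∑ w ∈ box L, D2 ψ (z+w) := by
    rw [D2, avgF, avgF, ← mul_sub, ← Finset.sum_sub_distrib]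
    congr 1
    refine Finset.sum_congr rfl fun w _ => ?_
    rw [D2]
    have e : z + (0,1) + w = z + w + (0,1) := by abel
    rw [e]
  have hcs1 : (∑ w ∈ box L, D1 ψ (z+w))^2 ≤ (L:ℝ)^2 * ∑ w ∈ box L, D1 ψ (z+w)^2 := by
    have := Finset.sum_mul_sq_le_sq_mul_sq (box L) (fun _ => (1:ℝ)) (fun w => D1 ψ (z+w))
    simp only [one_pow, one_mul, Finset.sum_const, nsmul_eq_mul, mul_one] at this
    calc (∑ w ∈ box L, D1 ψ (z+w))^2 ≤ ((box L).card : ℝ) * ∑ w ∈ box L, D1 ψ (z+w)^2 := this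
      _ = (L:ℝ)^2 * ∑ w ∈ box L, D1 ψ (z+w)^2 := by rw [box_card]; push_cast; ring
  have hcs2 : (∑ w ∈ box L, D2 ψ (z+w))^2 ≤ (L:ℝ)^2 * ∑ w ∈ box L, D2 ψ (z+w)^2 := by
    have := Finset.sum_mul_sq_le_sq_mul_sq (box L) (fun _ => (1:ℝ)) (fun w => D2 ψ (z+w))
    simp only [one_pow, one_mul, Finset.sum_const, nsmul_eq_mul, mul_one] at this
    calc (∑ w ∈ box L, D2 ψ (z+w))^2 ≤ ((box L).card : ℝ) * ∑ w ∈ box L, D2 ψ (z+w)^2 := this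
      _ = (L:ℝ)^2 * ∑ w ∈ box L, D2 ψ (z+w)^2 := by rw [box_card]; push_cast; ring
  have hDD := sum_DD_le hΓ (L := L) z
  have hsplit : ∑ w ∈ box L, (D1 ψ (z+w)^2 + D2 ψ (z+w)^2)
      = (∑ w ∈ box L, D1 ψ (z+w)^2) + (∑ w ∈ box L, D2 ψ (z+w)^2) :=
    Finset.sum_add_distrib
  rw [hD1, hD2]
  rw [mul_pow, mul_pow]
  have hL4 : (0:ℝ) < ((L:ℝ)^2)⁻¹^2 := by positivity
  calc ((L:ℝ)^2)⁻¹^2 * (∑ w ∈ box L, D1 ψ (z+w))^2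
        + ((L:ℝ)^2)⁻¹^2 * (∑ w ∈ box L, D2 ψ (z+w))^2
      ≤ ((L:ℝ)^2)⁻¹^2 * ((L:ℝ)^2 * ∑ w ∈ box L, D1 ψ (z+w)^2)
        + ((L:ℝ)^2)⁻¹^2 * ((L:ℝ)^2 * ∑ w ∈ box L, D2 ψ (z+w)^2) := by
        have := mul_le_mul_of_nonneg_left hcs1 (le_of_lt hL4)
        have := mul_le_mul_of_nonneg_left hcs2 (le_of_lt hL4)
        linarith
    _ = ((L:ℝ)^2)⁻¹ * ∑ w ∈ box L, (D1 ψ (z+w)^2 + D2 ψ (z+w)^2) := by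
        rw [hsplit]
        field_simp
    _ ≤ ((L:ℝ)^2)⁻¹ * ((L:ℝ)+1)^2 := by
        refine mul_le_mul_of_nonneg_left hDD (by positivity)
    _ = (((L:ℝ)+1)/L)^2 := by
        field_simp

include hΓ hL in
lemma transfer (z : ℤ × ℤ) : |avgF ψ L z - ψ z| ≤ 3 * L := by
  have hLR : (0:ℝ) < (L:ℝ) := by exact_mod_cast hL
  have hs2 : (0:ℝ) ≤ Real.sqrt 2 := Real.sqrt_nonneg 2
  have hg2 : ∀ u, D1 ψ u ^ 2 + D2 ψ u ^ 2 ≤ (Real.sqrt 2) ^ 2 := by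
    intro u
    rw [Real.sq_sqrt (by norm_num : (0:ℝ) ≤ 2)]
    have h1 := two_gamma ψ u
    have h2 := hΓ u
    nlinarith [sq_nonneg (D1 ψ (u - (1,0))), sq_nonneg (D2 ψ (u - (0,1)))]
  have hterm : ∀ w ∈ box L, |ψ (z+w) - ψ z| ≤ Real.sqrt 2 * (2*(L:ℝ) - 2) := by
    intro w hw
    simp only [box, Finset.mem_product, Finset.mem_Icc] at hw
    have hlip := hlipZ hs2 hg2 w.1 w.2 z hw.1.1 hw.2.1
    have e : z + (w.1, w.2) = z + w := by rw [Prod.ext_iff]; constructor <;> simp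
    rw [e] at hlip
    refine hlip.trans ?_
    have hw1 : ((w.1 : ℝ) + (w.2 : ℝ)) ≤ 2*(L:ℝ) - 2 := by
      have h1 : (w.1 : ℝ) ≤ (L:ℝ) - 1 := by exact_mod_cast hw.1.2
      have h2 : (w.2 : ℝ) ≤ (L:ℝ) - 1 := by exact_mod_cast hw.2.2
      linarith
    have := mul_le_mul_of_nonneg_left hw1 hs2
    push_cast
    linarith
  have hcard : (((box L).card : ℕ) : ℝ) = (L:ℝ)^2 := by rw [box_card]; push_cast; ring
  have havg : avgF ψ L z - ψ z = ((L:ℝ)^2)⁻¹ * ∑ w ∈ box L, (ψ (z + w) - ψ z) := by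
    rw [Finset.sum_sub_distrib, Finset.sum_const, nsmul_eq_mul, hcard, mul_sub, avgF]
    have e2 : ((L:ℝ)^2)⁻¹ * ((L:ℝ)^2 * ψ z) = ψ z := by field_simp
    rw [e2]
  rw [havg, abs_mul, abs_inv]
  have habs : |(L:ℝ)^2| = (L:ℝ)^2 := abs_of_pos (by positivity)
  rw [habs]
  have hsum : |∑ w ∈ box L, (ψ (z + w) - ψ z)| ≤ (L:ℝ)^2 * (Real.sqrt 2 * (2*(L:ℝ) - 2)) := by
    calc |∑ w ∈ box L, (ψ (z + w) - ψ z)| ≤ ∑ w ∈ box L, |ψ (z + w) - ψ z| :=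
        Finset.abs_sum_le_sum_abs _ _
      _ ≤ ∑ _w ∈ box L, Real.sqrt 2 * (2*(L:ℝ) - 2) := Finset.sum_le_sum hterm
      _ = ((box L).card : ℝ) * (Real.sqrt 2 * (2*(L:ℝ) - 2)) := by
          rw [Finset.sum_const, nsmul_eq_mul]
      _ = (L:ℝ)^2 * (Real.sqrt 2 * (2*(L:ℝ) - 2)) := by rw [box_card]; push_cast; ring
  have hfin : ((L:ℝ)^2)⁻¹ * ((L:ℝ)^2 * (Real.sqrt 2 * (2*(L:ℝ) - 2))) ≤ 3 * L := by
    rw [← mul_assoc, inv_mul_cancel₀ (by positivity), one_mul]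
    have h2 : Real.sqrt 2 ≤ 1.5 := by
      rw [show (1.5:ℝ) = Real.sqrt (1.5^2) by rw [Real.sqrt_sq (by norm_num)]]
      exact Real.sqrt_le_sqrt (by norm_num)
    nlinarith [hLR, hs2]
  calc ((L:ℝ)^2)⁻¹ * |∑ w ∈ box L, (ψ (z + w) - ψ z)|
      ≤ ((L:ℝ)^2)⁻¹ * ((L:ℝ)^2 * (Real.sqrt 2 * (2*(L:ℝ) - 2))) := by
        refine mul_le_mul_of_nonneg_left hsum (by positivity)
    _ ≤ 3 * L := hfin

end avg

/-! ### upper bound -/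

def euclDist' (x y : ℤ × ℤ) : ℝ :=
  Real.sqrt (((x.1 - y.1 : ℤ) : ℝ) ^ 2 + ((x.2 - y.2 : ℤ) : ℝ) ^ 2)

lemma UB_core {ψ : ℤ × ℤ → ℝ} (hΓ : ∀ z, gammaDensityZ2 ψ z ≤ 1) {L : ℕ} (hL : 0 < L)
    (y : ℤ × ℤ) (p q : ℕ) :
    |ψ (y + ((p:ℤ),(q:ℤ))) - ψ y| ≤
      ((L:ℝ)+1)/L * (Real.sqrt ((p:ℝ)^2+(q:ℝ)^2) + Real.sqrt ((p:ℝ)+(q:ℝ))) + 6*L := by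
  have hc : (0:ℝ) ≤ ((L:ℝ)+1)/L := by positivity
  have hg := lemA hΓ hL
  have hB := lemB_abs hc hg y p q
  have t1 := transfer hΓ hL (y + ((p:ℤ),(q:ℤ)))
  have t2 := transfer hΓ hL y
  have h3 := abs_sub_le (ψ (y + ((p:ℤ),(q:ℤ)))) (avgF ψ L (y + ((p:ℤ),(q:ℤ)))) (ψ y)
  have h4 := abs_sub_le (avgF ψ L (y + ((p:ℤ),(q:ℤ)))) (avgF ψ L y) (ψ y)
  have t1' : |ψ (y + ((p:ℤ),(q:ℤ))) - avgF ψ L (y + ((p:ℤ),(q:ℤ)))| ≤ 3*L := by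
    rw [abs_sub_comm]; exact t1
  linarith [t1', t2, h3, h4, hB]

def flipX : ℤ × ℤ → ℤ × ℤ := fun z => (-z.1, z.2)
def flipY : ℤ × ℤ → ℤ × ℤ := fun z => (z.1, -z.2)

lemma gamma_flipX (ψ : ℤ × ℤ → ℝ) (z : ℤ × ℤ) :
    gammaDensityZ2 (fun w => ψ (flipX w)) z = gammaDensityZ2 ψ (flipX z) := by
  rw [gamma_eq, gamma_eq]
  have e1 : flipX (z + (1,0)) = flipX z - (1,0) := by
    simp [flipX, Prod.ext_iff]; ring
  have e2 : flipX (z - (1,0)) = flipX z + (1,0) := by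
    simp [flipX, Prod.ext_iff]; ring
  have e3 : flipX (z + (0,1)) = flipX z + (0,1) := by
    simp [flipX, Prod.ext_iff]
  have e4 : flipX (z - (0,1)) = flipX z - (0,1) := by
    simp [flipX, Prod.ext_iff]
  simp only [e1, e2, e3, e4]
  ring

lemma gamma_flipY (ψ : ℤ × ℤ → ℝ) (z : ℤ × ℤ) :
    gammaDensityZ2 (fun w => ψ (flipY w)) z = gammaDensityZ2 ψ (flipY z) := by
  rw [gamma_eq, gamma_eq]
  have e1 : flipY (z + (1,0)) = flipY z + (1,0) := by
    simp [flipY, Prod.ext_iff]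
  have e2 : flipY (z - (1,0)) = flipY z - (1,0) := by
    simp [flipY, Prod.ext_iff]
  have e3 : flipY (z + (0,1)) = flipY z - (0,1) := by
    simp [flipY, Prod.ext_iff]; ring
  have e4 : flipY (z - (0,1)) = flipY z + (0,1) := by
    simp [flipY, Prod.ext_iff]; ring
  simp only [e1, e2, e3, e4]
  ring

lemma UB_quad {ψ : ℤ × ℤ → ℝ} (hΓ : ∀ z, gammaDensityZ2 ψ z ≤ 1) {L : ℕ} (hL : 0 < L)
    {x y : ℤ × ℤ} (h1 : y.1 ≤ x.1) (h2 : y.2 ≤ x.2) :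
    |ψ x - ψ y| ≤ ((L:ℝ)+1)/L * (euclDist' x y + Real.sqrt (2 * euclDist' x y)) + 6*L := by
  have hc : (0:ℝ) ≤ ((L:ℝ)+1)/L := by positivity
  set p := (x.1 - y.1).toNat with hp
  set q := (x.2 - y.2).toNat with hq
  have hpv : ((p:ℤ)) = x.1 - y.1 := Int.toNat_of_nonneg (by omega)
  have hqv : ((q:ℤ)) = x.2 - y.2 := Int.toNat_of_nonneg (by omega)
  have hx : x = y + ((p:ℤ),(q:ℤ)) := by
    rw [Prod.ext_iff, Prod.add_def]
    constructor <;> simp [hpv, hqv] <;> ring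
  have hcast1 : ((p:ℕ):ℝ) = ((x.1 - y.1 : ℤ) : ℝ) := by exact_mod_cast hpv
  have hcast2 : ((q:ℕ):ℝ) = ((x.2 - y.2 : ℤ) : ℝ) := by exact_mod_cast hqv
  have hde : euclDist' x y = Real.sqrt ((p:ℝ)^2+(q:ℝ)^2) := by
    rw [euclDist', hcast1, hcast2]
  have core := UB_core hΓ hL y p q
  rw [← hx] at core
  have hsq : Real.sqrt ((p:ℝ)+(q:ℝ)) ≤ Real.sqrt (2 * euclDist' x y) := by
    refine Real.sqrt_le_sqrt ?_
    rw [hde]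
    have hp' : (p:ℝ) ≤ Real.sqrt ((p:ℝ)^2+(q:ℝ)^2) := by
      have h := Real.sqrt_le_sqrt (show (p:ℝ)^2 ≤ (p:ℝ)^2+(q:ℝ)^2 by nlinarith [sq_nonneg (q:ℝ)])
      rwa [Real.sqrt_sq (by positivity)] at h
    have hq' : (q:ℝ) ≤ Real.sqrt ((p:ℝ)^2+(q:ℝ)^2) := by
      have h := Real.sqrt_le_sqrt (show (q:ℝ)^2 ≤ (p:ℝ)^2+(q:ℝ)^2 by nlinarith [sq_nonneg (p:ℝ)])
      rwa [Real.sqrt_sq (by positivity)] at h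
    linarith
  calc |ψ x - ψ y| ≤ ((L:ℝ)+1)/L * (Real.sqrt ((p:ℝ)^2+(q:ℝ)^2) + Real.sqrt ((p:ℝ)+(q:ℝ)))
        + 6*L := core
    _ ≤ ((L:ℝ)+1)/L * (euclDist' x y + Real.sqrt (2 * euclDist' x y)) + 6*L := by
        have := mul_le_mul_of_nonneg_left (add_le_add (le_of_eq hde.symm) hsq) hc
        linarith

lemma UB_all {ψ : ℤ × ℤ → ℝ} (hΓ : ∀ z, gammaDensityZ2 ψ z ≤ 1) {L : ℕ} (hL : 0 < L)
    (x y : ℤ × ℤ) :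
    |ψ x - ψ y| ≤ ((L:ℝ)+1)/L * (euclDist' x y + Real.sqrt (2 * euclDist' x y)) + 6*L := by
  rcases le_total y.1 x.1 with h1 | h1 <;> rcases le_total y.2 x.2 with h2 | h2
  · exact UB_quad hΓ hL h1 h2
  · have hΓ' : ∀ z, gammaDensityZ2 (fun w => ψ (flipY w)) z ≤ 1 := by
      intro z; rw [gamma_flipY]; exact hΓ (flipY z)
    have h1' : (flipY y).1 ≤ (flipY x).1 := by simpa [flipY] using h1
    have h2' : (flipY y).2 ≤ (flipY x).2 := by simp [flipY]; omega
    have this := UB_quad hΓ' hL h1' h2'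
    have hxx : flipY (flipY x) = x := by simp [flipY]
    have hyy : flipY (flipY y) = y := by simp [flipY]
    rw [hxx, hyy] at this
    have hdist : euclDist' (flipY x) (flipY y) = euclDist' x y := by
      rw [euclDist', euclDist']
      congr 1
      push_cast [flipY]
      ring
    rwa [hdist] at this
  · have hΓ' : ∀ z, gammaDensityZ2 (fun w => ψ (flipX w)) z ≤ 1 := by
      intro z; rw [gamma_flipX]; exact hΓ (flipX z)
    have h1' : (flipX y).1 ≤ (flipX x).1 := by simp [flipX]; omega
    have h2' : (flipX y).2 ≤ (flipX x).2 := by simpa [flipX] using h2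
    have this := UB_quad hΓ' hL h1' h2'
    have hxx : flipX (flipX x) = x := by simp [flipX]
    have hyy : flipX (flipX y) = y := by simp [flipX]
    rw [hxx, hyy] at this
    have hdist : euclDist' (flipX x) (flipX y) = euclDist' x y := by
      rw [euclDist', euclDist']
      congr 1
      push_cast [flipX]
      ring
    rwa [hdist] at this
  · have hΓ' : ∀ z, gammaDensityZ2 (fun w => ψ (flipX (flipY w))) z ≤ 1 := by
      intro z
      have h := gamma_flipY (fun w => ψ (flipX w)) z
      rw [h, gamma_flipX]
      exact hΓ _
    have h1' : (flipX (flipY y)).1 ≤ (flipX (flipY x)).1 := by simp [flipX, flipY]; omega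
    have h2' : (flipX (flipY y)).2 ≤ (flipX (flipY x)).2 := by simp [flipX, flipY]; omega
    have this := UB_quad hΓ' hL h1' h2'
    have hxx : flipX (flipY (flipX (flipY x))) = x := by simp [flipX, flipY]
    have hyy : flipX (flipY (flipX (flipY y))) = y := by simp [flipX, flipY]
    rw [hxx, hyy] at this
    have hdist : euclDist' (flipX (flipY x)) (flipX (flipY y)) = euclDist' x y := by
      rw [euclDist', euclDist']
      congr 1
      push_cast [flipX, flipY]
      ring
    rwa [hdist] at this

def ubound (L : ℕ) (x y : ℤ × ℤ) : ℝ :=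
  ((L:ℝ)+1)/L * (euclDist' x y + Real.sqrt (2 * euclDist' x y)) + 6*L

lemma ubound_nonneg (L : ℕ) (x y : ℤ × ℤ) : 0 ≤ ubound L x y := by
  rw [ubound, euclDist']
  positivity

lemma rset_le {L : ℕ} (hL : 0 < L) (x y : ℤ × ℤ) :
    ∀ r ∈ {r | ∃ ψ : ℤ × ℤ → ℝ, (Function.support ψ).Finite ∧
      (∀ z, gammaDensityZ2 ψ z ≤ 1) ∧ r = |ψ x - ψ y|}, r ≤ ubound L x y := by
  rintro r ⟨ψ, _, hΓ, rfl⟩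
  exact UB_all hΓ hL x y

lemma rho_le {L : ℕ} (hL : 0 < L) (x y : ℤ × ℤ) : rhoEZ2 x y ≤ ubound L x y :=
  Real.sSup_le (rset_le hL x y) (ubound_nonneg L x y)

lemma rho_bdd (x y : ℤ × ℤ) :
    BddAbove {r | ∃ ψ : ℤ × ℤ → ℝ, (Function.support ψ).Finite ∧
      (∀ z, gammaDensityZ2 ψ z ≤ 1) ∧ r = |ψ x - ψ y|} :=
  ⟨ubound 1 x y, fun _ hr => rset_le one_pos x y _ hr⟩

/-! ### lower bound -/

lemma max0_pos {a : ℝ} (h : max 0 a ≠ 0) : 0 < a := by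
  by_contra hc
  push_neg at hc
  exact h (max_eq_left hc)

section LB

def lf (y : ℤ × ℤ) (v1 v2 : ℝ) (z : ℤ × ℤ) : ℝ :=
  v1 * ((z.1 - y.1 : ℤ):ℝ) + v2 * ((z.2 - y.2 : ℤ):ℝ)

def uff (y : ℤ × ℤ) (v1 v2 : ℝ) (z : ℤ × ℤ) : ℝ :=
  -v2 * ((z.1 - y.1 : ℤ):ℝ) + v1 * ((z.2 - y.2 : ℤ):ℝ)

def mff (y : ℤ × ℤ) (v1 v2 d s S : ℝ) (z : ℤ × ℤ) : ℝ :=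
  min (min (lf y v1 v2 z) (2*d - lf y v1 v2 z)) (s * (S - |uff y v1 v2 z|))

def psiLB (y : ℤ × ℤ) (v1 v2 d s S β : ℝ) (z : ℤ × ℤ) : ℝ :=
  β * max 0 (mff y v1 v2 d s S z)

variable {y : ℤ × ℤ} {v1 v2 d s S β : ℝ}

lemma psi_edge (hβ : 0 ≤ β) (hs : 0 ≤ s) (z w : ℤ × ℤ) :
    |psiLB y v1 v2 d s S β z - psiLB y v1 v2 d s S β w|
      ≤ β * max |lf y v1 v2 z - lf y v1 v2 w| (s * |uff y v1 v2 z - uff y v1 v2 w|) := by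
  rw [psiLB, psiLB,
    show β * max 0 (mff y v1 v2 d s S z) - β * max 0 (mff y v1 v2 d s S w)
      = β * (max 0 (mff y v1 v2 d s S z) - max 0 (mff y v1 v2 d s S w)) by ring,
    abs_mul, abs_of_nonneg hβ]
  refine mul_le_mul_of_nonneg_left ?_ hβ
  have h1 : |max 0 (mff y v1 v2 d s S z) - max 0 (mff y v1 v2 d s S w)|
      ≤ |mff y v1 v2 d s S z - mff y v1 v2 d s S w| := by
    simpa [max_comm] using abs_max_sub_max_le_abs (mff y v1 v2 d s S z) (mff y v1 v2 d s S w) 0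
  refine h1.trans ?_
  rw [mff, mff]
  have h2 := abs_min_sub_min_le_max (min (lf y v1 v2 z) (2*d - lf y v1 v2 z))
    (s * (S - |uff y v1 v2 z|)) (min (lf y v1 v2 w) (2*d - lf y v1 v2 w))
    (s * (S - |uff y v1 v2 w|))
  refine h2.trans (max_le_max ?_ ?_)
  · have h3 := abs_min_sub_min_le_max (lf y v1 v2 z) (2*d - lf y v1 v2 z)
      (lf y v1 v2 w) (2*d - lf y v1 v2 w)
    refine h3.trans ?_
    have e : |(2*d - lf y v1 v2 z) - (2*d - lf y v1 v2 w)| = |lf y v1 v2 z - lf y v1 v2 w| := by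
      rw [show (2*d - lf y v1 v2 z) - (2*d - lf y v1 v2 w)
        = -(lf y v1 v2 z - lf y v1 v2 w) by ring, abs_neg]
    rw [e, max_self]
  · rw [show s * (S - |uff y v1 v2 z|) - s * (S - |uff y v1 v2 w|)
      = s * (|uff y v1 v2 w| - |uff y v1 v2 z|) by ring, abs_mul, abs_of_nonneg hs]
    refine mul_le_mul_of_nonneg_left ?_ hs
    rw [abs_sub_comm (uff y v1 v2 z)]
    exact abs_abs_sub_abs_le_abs_sub _ _

set_option maxHeartbeats 1000000 in
lemma psi_gamma (hv : v1^2 + v2^2 = 1) (hs : 0 < s) (hβ : 0 < β)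
    (hβ2 : β^2 * (1 + s^2) = 1) :
    ∀ z, gammaDensityZ2 (psiLB y v1 v2 d s S β) z ≤ 1 := by
  intro z
  rw [gamma_eq]
  have hM1nonneg : (0:ℝ) ≤ max |v1| (s * |v2|) := le_trans (abs_nonneg v1) (le_max_left _ _)
  have hM2nonneg : (0:ℝ) ≤ max |v2| (s * |v1|) := le_trans (abs_nonneg v2) (le_max_left _ _)
  have hlfd : ∀ w w' : ℤ × ℤ, lf y v1 v2 w - lf y v1 v2 w'
      = v1 * ((w.1 - w'.1 : ℤ):ℝ) + v2 * ((w.2 - w'.2 : ℤ):ℝ) := by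
    intro w w'; rw [lf, lf]; push_cast; ring
  have hufd : ∀ w w' : ℤ × ℤ, uff y v1 v2 w - uff y v1 v2 w'
      = -v2 * ((w.1 - w'.1 : ℤ):ℝ) + v1 * ((w.2 - w'.2 : ℤ):ℝ) := by
    intro w w'; rw [uff, uff]; push_cast; ring
  have hb1 : |psiLB y v1 v2 d s S β z - psiLB y v1 v2 d s S β (z + (1,0))|
      ≤ β * max |v1| (s * |v2|) := by
    refine (psi_edge (le_of_lt hβ) (le_of_lt hs) z (z + (1,0))).trans ?_
    refine mul_le_mul_of_nonneg_left ?_ (le_of_lt hβ)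
    rw [hlfd, hufd]
    have e1 : (z.1 - (z + ((1:ℤ),(0:ℤ))).1 : ℤ) = -1 := by simp
    have e2 : (z.2 - (z + ((1:ℤ),(0:ℤ))).2 : ℤ) = 0 := by simp
    rw [e1, e2]
    push_cast
    have e3 : v1 * (-1:ℝ) + v2 * 0 = -v1 := by ring
    have e4 : -v2 * (-1:ℝ) + v1 * 0 = v2 := by ring
    rw [e3, e4, abs_neg]
  have hb2 : |psiLB y v1 v2 d s S β z - psiLB y v1 v2 d s S β (z - (1,0))|
      ≤ β * max |v1| (s * |v2|) := by
    refine (psi_edge (le_of_lt hβ) (le_of_lt hs) z (z - (1,0))).trans ?_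
    refine mul_le_mul_of_nonneg_left ?_ (le_of_lt hβ)
    rw [hlfd, hufd]
    have e1 : (z.1 - (z - ((1:ℤ),(0:ℤ))).1 : ℤ) = 1 := by simp
    have e2 : (z.2 - (z - ((1:ℤ),(0:ℤ))).2 : ℤ) = 0 := by simp
    rw [e1, e2]
    push_cast
    have e3 : v1 * (1:ℝ) + v2 * 0 = v1 := by ring
    have e4 : -v2 * (1:ℝ) + v1 * 0 = -v2 := by ring
    rw [e3, e4, abs_neg]
  have hb3 : |psiLB y v1 v2 d s S β z - psiLB y v1 v2 d s S β (z + (0,1))|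
      ≤ β * max |v2| (s * |v1|) := by
    refine (psi_edge (le_of_lt hβ) (le_of_lt hs) z (z + (0,1))).trans ?_
    refine mul_le_mul_of_nonneg_left ?_ (le_of_lt hβ)
    rw [hlfd, hufd]
    have e1 : (z.1 - (z + ((0:ℤ),(1:ℤ))).1 : ℤ) = 0 := by simp
    have e2 : (z.2 - (z + ((0:ℤ),(1:ℤ))).2 : ℤ) = -1 := by simp
    rw [e1, e2]
    push_cast
    have e3 : v1 * (0:ℝ) + v2 * (-1) = -v2 := by ring
    have e4 : -v2 * (0:ℝ) + v1 * (-1) = -v1 := by ring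
    rw [e3, e4, abs_neg, abs_neg]
  have hb4 : |psiLB y v1 v2 d s S β z - psiLB y v1 v2 d s S β (z - (0,1))|
      ≤ β * max |v2| (s * |v1|) := by
    refine (psi_edge (le_of_lt hβ) (le_of_lt hs) z (z - (0,1))).trans ?_
    refine mul_le_mul_of_nonneg_left ?_ (le_of_lt hβ)
    rw [hlfd, hufd]
    have e1 : (z.1 - (z - ((0:ℤ),(1:ℤ))).1 : ℤ) = 0 := by simp
    have e2 : (z.2 - (z - ((0:ℤ),(1:ℤ))).2 : ℤ) = 1 := by simp
    rw [e1, e2]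
    push_cast
    have e3 : v1 * (0:ℝ) + v2 * (1:ℝ) = v2 := by ring
    have e4 : -v2 * (0:ℝ) + v1 * (1:ℝ) = v1 := by ring
    rw [e3, e4]
  have hsq : ∀ (e C : ℝ), |e| ≤ C → e^2 ≤ C^2 := by
    intro e C h
    nlinarith [sq_abs e, abs_nonneg e]
  have hM1sq : (max |v1| (s * |v2|))^2 ≤ v1^2 + s^2 * v2^2 := by
    rcases max_cases |v1| (s * |v2|) with ⟨h, _⟩ | ⟨h, _⟩ <;> rw [h]
    · nlinarith [sq_abs v1, sq_nonneg (s*v2), sq_abs v2]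
    · nlinarith [sq_nonneg v1, sq_abs v2]
  have hM2sq : (max |v2| (s * |v1|))^2 ≤ v2^2 + s^2 * v1^2 := by
    rcases max_cases |v2| (s * |v1|) with ⟨h, _⟩ | ⟨h, _⟩ <;> rw [h]
    · nlinarith [sq_abs v2, sq_nonneg (s*v1), sq_abs v1]
    · nlinarith [sq_nonneg v2, sq_abs v1]
  have q1 := hsq _ _ hb1
  have q2 := hsq _ _ hb2
  have q3 := hsq _ _ hb3
  have q4 := hsq _ _ hb4
  have hfin : β^2 * (max |v1| (s * |v2|))^2 + β^2 * (max |v2| (s * |v1|))^2 ≤ 1 := by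
    have h6 : v1^2 + s^2*v2^2 + (v2^2 + s^2*v1^2) = (1+s^2)*(v1^2+v2^2) := by ring
    have h7 : (1+s^2)*(v1^2+v2^2) = 1+s^2 := by rw [hv, mul_one]
    have h5 : (max |v1| (s * |v2|))^2 + (max |v2| (s * |v1|))^2 ≤ 1 + s^2 := by
      linarith [hM1sq, hM2sq]
    have h8 := mul_le_mul_of_nonneg_left h5 (sq_nonneg β)
    have e0 : β^2*((max |v1| (s * |v2|))^2 + (max |v2| (s * |v1|))^2)
        = β^2 * (max |v1| (s * |v2|))^2 + β^2 * (max |v2| (s * |v1|))^2 := by ring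
    linarith [h8, hβ2, e0]
  have e1 : (β * max |v1| (s * |v2|))^2 = β^2 * (max |v1| (s * |v2|))^2 := by ring
  have e2 : (β * max |v2| (s * |v1|))^2 = β^2 * (max |v2| (s * |v1|))^2 := by ring
  rw [e1] at q1 q2
  rw [e2] at q3 q4
  linarith [q1, q2, q3, q4, hfin]

lemma psi_supp (hv : v1^2 + v2^2 = 1) (hv1a : |v1| ≤ 1) (hv2a : |v2| ≤ 1)
    (hs : 0 < s) (hβ : 0 < β) :
    (Function.support (psiLB y v1 v2 d s S β)).Finite := by
  set K : ℤ := ⌈2*d + S⌉ with hK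
  refine Set.Finite.subset (Finset.finite_toSet
    (Finset.Icc (y.1 - K, y.2 - K) (y.1 + K, y.2 + K))) ?_
  intro z hz
  have hmz : 0 < mff y v1 v2 d s S z := by
    refine max0_pos (fun h => ?_)
    apply hz
    rw [Function.mem_support] at *
    rw [psiLB, h, mul_zero]
  rw [mff] at hmz
  have hl1 : 0 < lf y v1 v2 z :=
    lt_of_lt_of_le hmz ((min_le_left _ _).trans (min_le_left _ _))
  have hl2 : lf y v1 v2 z < 2*d := by
    have := lt_of_lt_of_le hmz ((min_le_left _ _).trans (min_le_right _ _))
    linarith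
  have hu1 : |uff y v1 v2 z| < S := by
    have h := lt_of_lt_of_le hmz (min_le_right _ _)
    nlinarith [hs]
  have hla : |lf y v1 v2 z| ≤ 2*d := by
    rw [abs_of_pos hl1]; linarith
  have hz1 : ((z.1 - y.1 : ℤ):ℝ) = v1 * lf y v1 v2 z - v2 * uff y v1 v2 z := by
    rw [lf, uff]
    have e : v1 * (v1 * ((z.1 - y.1 : ℤ):ℝ) + v2 * ((z.2 - y.2 : ℤ):ℝ))
        - v2 * (-v2 * ((z.1 - y.1 : ℤ):ℝ) + v1 * ((z.2 - y.2 : ℤ):ℝ))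
        = (v1^2+v2^2) * ((z.1 - y.1 : ℤ):ℝ) := by ring
    rw [e, hv, one_mul]
  have hz2 : ((z.2 - y.2 : ℤ):ℝ) = v2 * lf y v1 v2 z + v1 * uff y v1 v2 z := by
    rw [lf, uff]
    have e : v2 * (v1 * ((z.1 - y.1 : ℤ):ℝ) + v2 * ((z.2 - y.2 : ℤ):ℝ))
        + v1 * (-v2 * ((z.1 - y.1 : ℤ):ℝ) + v1 * ((z.2 - y.2 : ℤ):ℝ))
        = (v1^2+v2^2) * ((z.2 - y.2 : ℤ):ℝ) := by ring
    rw [e, hv, one_mul]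
  have hb1 : |((z.1 - y.1 : ℤ):ℝ)| ≤ 2*d + S := by
    rw [hz1]
    calc |v1 * lf y v1 v2 z - v2 * uff y v1 v2 z|
        ≤ |v1 * lf y v1 v2 z| + |v2 * uff y v1 v2 z| := abs_sub _ _
      _ = |v1| * |lf y v1 v2 z| + |v2| * |uff y v1 v2 z| := by rw [abs_mul, abs_mul]
      _ ≤ 1 * (2*d) + 1 * S := by
          refine add_le_add (mul_le_mul hv1a hla (abs_nonneg _) zero_le_one)
            (mul_le_mul hv2a (le_of_lt hu1) (abs_nonneg _) zero_le_one)
      _ = 2*d + S := by ring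
  have hb2 : |((z.2 - y.2 : ℤ):ℝ)| ≤ 2*d + S := by
    rw [hz2]
    calc |v2 * lf y v1 v2 z + v1 * uff y v1 v2 z|
        ≤ |v2 * lf y v1 v2 z| + |v1 * uff y v1 v2 z| := abs_add_le _ _
      _ = |v2| * |lf y v1 v2 z| + |v1| * |uff y v1 v2 z| := by rw [abs_mul, abs_mul]
      _ ≤ 1 * (2*d) + 1 * S := by
          refine add_le_add (mul_le_mul hv2a hla (abs_nonneg _) zero_le_one)
            (mul_le_mul hv1a (le_of_lt hu1) (abs_nonneg _) zero_le_one)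
      _ = 2*d + S := by ring
  have hKle : (2*d + S : ℝ) ≤ (K:ℝ) := Int.le_ceil _
  have hi1 : |z.1 - y.1| ≤ K := by
    have : |((z.1 - y.1 : ℤ):ℝ)| ≤ (K:ℝ) := hb1.trans hKle
    exact_mod_cast (by rwa [← Int.cast_abs] at this : ((|z.1 - y.1| : ℤ):ℝ) ≤ (K:ℝ))
  have hi2 : |z.2 - y.2| ≤ K := by
    have : |((z.2 - y.2 : ℤ):ℝ)| ≤ (K:ℝ) := hb2.trans hKle
    exact_mod_cast (by rwa [← Int.cast_abs] at this : ((|z.2 - y.2| : ℤ):ℝ) ≤ (K:ℝ))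
  simp only [Finset.coe_Icc, Set.mem_Icc, Prod.le_def]
  constructor
  · constructor <;> [skip; skip] <;> rw [abs_le] at hi1 hi2 <;> omega
  · constructor <;> rw [abs_le] at hi1 hi2 <;> omega

set_option maxHeartbeats 1000000 in
lemma rho_ge (x y : ℤ × ℤ) (hxy : x ≠ y) {t : ℝ} (ht0 : 0 < t) (ht1 : t ≤ 1) :
    (1 - t) * euclDist' x y ≤ rhoEZ2 x y := by
  set a1 : ℝ := ((x.1 - y.1 : ℤ) : ℝ) with ha1
  set a2 : ℝ := ((x.2 - y.2 : ℤ) : ℝ) with ha2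
  have hA : 0 < a1^2 + a2^2 := by
    have hne : x.1 - y.1 ≠ 0 ∨ x.2 - y.2 ≠ 0 := by
      by_contra h
      push_neg at h
      exact hxy (by rw [Prod.ext_iff]; omega)
    rcases hne with h | h
    · have h1 : a1 ≠ 0 := by rw [ha1]; exact_mod_cast h
      have := sq_pos_of_ne_zero h1
      nlinarith [sq_nonneg a2]
    · have h1 : a2 ≠ 0 := by rw [ha2]; exact_mod_cast h
      have := sq_pos_of_ne_zero h1
      nlinarith [sq_nonneg a1]
  set d := Real.sqrt (a1^2+a2^2) with hd'
  have hd : 0 < d := Real.sqrt_pos.mpr hA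
  have hde : euclDist' x y = d := rfl
  have hd2 : d^2 = a1^2+a2^2 := Real.sq_sqrt (le_of_lt hA)
  set v1 := a1/d with hv1
  set v2 := a2/d with hv2
  have hv : v1^2 + v2^2 = 1 := by
    have e : (a1/d)^2 + (a2/d)^2 = (a1^2+a2^2)/d^2 := by ring
    rw [hv1, hv2, e, ← hd2, div_self (ne_of_gt (by positivity : (0:ℝ) < d^2))]
  have hv1a : |v1| ≤ 1 := by
    have := sq_nonneg v2
    have h1 : v1^2 ≤ 1 := by linarith
    nlinarith [sq_abs v1, abs_nonneg v1]
  have hv2a : |v2| ≤ 1 := by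
    have := sq_nonneg v1
    have h1 : v2^2 ≤ 1 := by linarith
    nlinarith [sq_abs v2, abs_nonneg v2]
  set s := Real.sqrt t with hs'
  have hs : 0 < s := Real.sqrt_pos.mpr ht0
  have hs2 : s^2 = t := Real.sq_sqrt (le_of_lt ht0)
  set β := (Real.sqrt (1+t))⁻¹ with hβ'
  have h1t : (0:ℝ) < 1 + t := by linarith
  have hsq1t : 0 < Real.sqrt (1+t) := Real.sqrt_pos.mpr h1t
  have hβpos : 0 < β := by positivity
  have hβ2 : β^2 * (1+s^2) = 1 := by
    rw [hs2, hβ', inv_pow, Real.sq_sqrt (le_of_lt h1t)]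
    field_simp
  set S := d / s with hS'
  -- endpoint values
  have hℓx : lf y v1 v2 x = d := by
    rw [lf, hv1, hv2, ← ha1, ← ha2]
    have e : a1/d*a1 + a2/d*a2 = (a1^2+a2^2)/d := by ring
    rw [e, ← hd2, sq, mul_div_assoc, div_self (ne_of_gt hd), mul_one]
  have hux : uff y v1 v2 x = 0 := by
    rw [uff, hv1, hv2, ← ha1, ← ha2]
    ring
  have hψx : psiLB y v1 v2 d s S β x = β * d := by
    rw [psiLB, mff, hℓx, hux]
    have h2d : 2*d - d = d := by ring
    have hsS : s * (S - |(0:ℝ)|) = d := by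
      rw [abs_zero, sub_zero, hS', mul_comm, div_mul_cancel₀ d (ne_of_gt hs)]
    rw [h2d, hsS, min_self, min_self, max_eq_right (le_of_lt hd)]
  have hψy : psiLB y v1 v2 d s S β y = 0 := by
    rw [psiLB]
    have hly : lf y v1 v2 y = 0 := by rw [lf]; simp
    have hmy : mff y v1 v2 d s S y ≤ 0 := by
      rw [mff]
      calc min (min (lf y v1 v2 y) (2*d - lf y v1 v2 y)) (s * (S - |uff y v1 v2 y|))
          ≤ min (lf y v1 v2 y) (2*d - lf y v1 v2 y) := min_le_left _ _
        _ ≤ lf y v1 v2 y := min_le_left _ _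
        _ = 0 := hly
    rw [max_eq_left hmy, mul_zero]
  -- membership
  have hmem : β * d ∈ {r | ∃ ψ : ℤ × ℤ → ℝ, (Function.support ψ).Finite ∧
      (∀ z, gammaDensityZ2 ψ z ≤ 1) ∧ r = |ψ x - ψ y|} := by
    refine ⟨psiLB y v1 v2 d s S β, psi_supp hv hv1a hv2a hs hβpos,
      psi_gamma hv hs hβpos hβ2, ?_⟩
    rw [hψx, hψy, sub_zero, abs_of_pos (by positivity)]
  have hle : β * d ≤ rhoEZ2 x y := le_csSup (rho_bdd x y) hmem
  have hβt : 1 - t ≤ β := by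
    rcases le_or_gt (1 - t) 0 with h | h
    · linarith [hβpos]
    · have hu2 : Real.sqrt (1+t)^2 = 1+t := Real.sq_sqrt (le_of_lt h1t)
      have hss : 1 ≤ Real.sqrt (1+t) := by
        nlinarith [hu2, Real.sqrt_nonneg (1+t)]
      have hcert : (1 - t) * Real.sqrt (1+t) ≤ 1 := by
        have hposc : 0 ≤ (Real.sqrt (1+t) - 1)
            * (Real.sqrt (1+t)^2 + Real.sqrt (1+t) - 1) :=
          mul_nonneg (by linarith [hss]) (by nlinarith [hss])
        nlinarith [hposc, hu2]
      have hdiv : (1-t) ≤ 1 / Real.sqrt (1+t) := (le_div_iff₀ hsq1t).mpr hcert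
      rw [hβ', show (Real.sqrt (1+t))⁻¹ = 1 / Real.sqrt (1+t) from (one_div _).symm]
      exact hdiv
  calc (1 - t) * euclDist' x y = (1 - t) * d := by rw [hde]
    _ ≤ β * d := mul_le_mul_of_nonneg_right hβt (le_of_lt hd)
    _ ≤ rhoEZ2 x y := hle

end LB

theorem stmt19' :
    ∀ ε : ℝ, 0 < ε → ∃ R : ℝ, 0 < R ∧ ∀ x y : ℤ × ℤ, R ≤ euclDist' x y →
      |rhoEZ2 x y / euclDist' x y - 1| < ε := by
  intro ε hε
  set ε' := min ε 1 with hε'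
  have hε'0 : 0 < ε' := lt_min hε one_pos
  have hε'1 : ε' ≤ 1 := min_le_right _ _
  have hε'ε : ε' ≤ ε := min_le_left _ _
  set L : ℕ := Nat.ceil (4/ε') + 1 with hL'
  have hL : 0 < L := Nat.succ_pos _
  have hLR : (0:ℝ) < L := by exact_mod_cast hL
  have hLge : 4/ε' ≤ (L:ℝ) := by
    calc 4/ε' ≤ (Nat.ceil (4/ε') : ℝ) := Nat.le_ceil _
      _ ≤ (L:ℝ) := by exact_mod_cast Nat.le_succ _
  have h4 : ε' * (4/ε') = 4 := by field_simp
  have hfrac : ((L:ℝ)+1)/L ≤ 1 + ε'/4 := by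
    rw [div_le_iff₀ hLR]
    nlinarith [h4, mul_le_mul_of_nonneg_left hLge (le_of_lt hε'0)]
  have hfrac2 : ((L:ℝ)+1)/L ≤ 2 := by
    refine hfrac.trans ?_
    linarith
  have hfracpos : 0 ≤ ((L:ℝ)+1)/L := by positivity
  set R := max (128/ε'^2) (24*(L:ℝ)/ε') + 1 with hR'
  have hR0 : 0 < R := by
    have h1 : (0:ℝ) < 128/ε'^2 := by positivity
    have := le_max_left (128/ε'^2) (24*(L:ℝ)/ε')
    rw [hR']
    linarith
  refine ⟨R, hR0, ?_⟩
  intro x y hxy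
  set D := euclDist' x y with hD'
  have hD0 : 0 < D := lt_of_lt_of_le hR0 hxy
  have hxy' : x ≠ y := by
    intro h
    subst h
    have : D = 0 := by
      rw [hD', euclDist']
      simp
    linarith
  have hDR1 : 128/ε'^2 ≤ D := by
    have := le_max_left (128/ε'^2) (24*(L:ℝ)/ε')
    rw [hR'] at hxy
    linarith
  have hDR2 : 24*(L:ℝ)/ε' ≤ D := by
    have := le_max_right (128/ε'^2) (24*(L:ℝ)/ε')
    rw [hR'] at hxy
    linarith
  -- lower bound
  have hge : (1 - ε'/2) * D ≤ rhoEZ2 x y := by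
    have h := rho_ge x y hxy' (t := ε'/2) (by positivity) (by linarith)
    exact h
  -- upper bound
  have hub : rhoEZ2 x y ≤ ((L:ℝ)+1)/L * (D + Real.sqrt (2*D)) + 6*L := rho_le hL x y
  have hsqrt : Real.sqrt (2*D) ≤ ε'*D/8 := by
    have h1 : 0 ≤ ε'*D/8 := by positivity
    rw [show ε'*D/8 = Real.sqrt ((ε'*D/8)^2) from (Real.sqrt_sq h1).symm]
    refine Real.sqrt_le_sqrt ?_
    have h2 : ε'^2 * D ≥ 128 := by
      have h3 := mul_le_mul_of_nonneg_left hDR1 (le_of_lt (show (0:ℝ) < ε'^2 by positivity))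
      have h4' : ε'^2 * (128/ε'^2) = 128 := by field_simp
      linarith
    nlinarith [hD0, sq_nonneg ε']
  have h6L : 6*(L:ℝ) ≤ ε'*D/4 := by
    have h3 := mul_le_mul_of_nonneg_left hDR2 (le_of_lt hε'0)
    have h4' : ε' * (24*(L:ℝ)/ε') = 24*L := by field_simp
    linarith
  have hubD : rhoEZ2 x y ≤ (1 + 3*ε'/4) * D := by
    have hstep : ((L:ℝ)+1)/L * (D + Real.sqrt (2*D)) ≤ (1+ε'/4) * (D + ε'*D/8) := by
      refine mul_le_mul hfrac (by linarith [hsqrt]) ?_ (by positivity)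
      positivity
    have hexp : (1+ε'/4) * (D + ε'*D/8) ≤ D + ε'*D/4 + ε'*D/4 := by
      nlinarith [hε'0, hε'1, hD0]
    linarith
  rw [abs_lt]
  constructor
  · have h5 : (1 - ε'/2) ≤ rhoEZ2 x y / D := (le_div_iff₀ hD0).mpr (by linarith)
    have : ε'/2 < ε := by linarith
    linarith
  · have h5 : rhoEZ2 x y / D ≤ 1 + 3*ε'/4 := (div_le_iff₀ hD0).mpr (by linarith)
    have : 3*ε'/4 < ε := by linarith
    linarith

end Davies

theorem stmt19 :
    ∀ ε : ℝ, 0 < ε → ∃ R : ℝ, 0 < R ∧ ∀ x y : ℤ × ℤ, R ≤ euclDist x y →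
      |rhoEZ2 x y / euclDist x y - 1| < ε := by
  have h : euclDist = Davies.euclDist' := rfl
  rw [h]
  exact Davies.stmt19'

end
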